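/- Let R be a ring. There exists an infinite cardinal κ such that for every phantom morphism f : M → N of left R-modules, the collection S of pairs of submodules (M', N') with M' a pure submodule of M, N' a pure submodule of N, f(M') ⊆ N', the restriction f|_{M'} : M' → N' a phantom morphism, and both M' and N' generated by at most κ elements, is directed under componentwise inclusion, and ⋃_{(M',N') ∈ S} M' = M and ⋃_{(M',N') ∈ S} N' = N. -/

import Mathlib

universe u

/-- A morphism `f : M → N` of left `R`-modules is *phantom* if for every finitely presented
left `R`-module `L` and every homomorphism `g : L → M`, the composition `f ∘ g` factors
through a projective left `R`-module. -/
def IsPhantom {R : Type u} [Ring R] {M N : Type u} [AddCommGroup M] [AddCommGroup N]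
    [Module R M] [Module R N] (f : M →ₗ[R] N) : Prop :=
  ∀ (L : Type u) [AddCommGroup L] [Module R L] [Module.FinitePresentation R L]
    (g : L →ₗ[R] M),
    ∃ (P : Type u) (_ : AddCommGroup P) (_ : Module R P) (_ : Module.Projective R P)
      (α : L →ₗ[R] P) (β : P →ₗ[R] N), β.comp α = f.comp g

/-- A submodule `P ≤ M` is *pure* if every finite system of `R`-linear equations with
constants in `P` which is solvable in `M` is already solvable in `P` (this is the standard
equational characterization, over an arbitrary ring, of the requirement that
`L ⊗_R P → L ⊗_R M` be injective for every right `R`-module `L`). -/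
def IsPureSubmodule {R : Type u} [Ring R] {M : Type u} [AddCommGroup M] [Module R M]
    (P : Submodule R M) : Prop :=
  ∀ (m n : ℕ) (A : Matrix (Fin m) (Fin n) R) (b : Fin m → P),
    (∃ y : Fin n → M, ∀ i, ∑ j, A i j • y j = (b i : M)) →
    ∃ z : Fin n → P, ∀ i, ∑ j, A i j • z j = b i

/-- A pair of submodules `(M', N')` is a *good pair* for `f : M → N` (relative to `κ`) if
`M'` and `N'` are pure submodules, `f(M') ⊆ N'`, the restriction `f|_{M'} : M' → N'` is a
phantom morphism, and both `M'` and `N'` are generated by at most `κ` elements. -/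
def IsGoodPair {R : Type u} [Ring R] {M N : Type u} [AddCommGroup M] [AddCommGroup N]
    [Module R M] [Module R N] (f : M →ₗ[R] N) (κ : Cardinal.{u})
    (p : Submodule R M × Submodule R N) : Prop :=
  IsPureSubmodule p.1 ∧ IsPureSubmodule p.2 ∧
  (∀ x ∈ p.1, f x ∈ p.2) ∧
  (∀ hsub : ∀ x ∈ p.1, f x ∈ p.2, IsPhantom (f.restrict hsub)) ∧
  (∃ s : Set M, Cardinal.mk s ≤ κ ∧ Submodule.span R s = p.1) ∧
  (∃ t : Set N, Cardinal.mk t ≤ κ ∧ Submodule.span R t = p.2)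


open Cardinal Submodule



noncomputable def kappa (R : Type u) [Ring R] : Cardinal.{u} := max ℵ₀ #R

variable {R : Type u} [Ring R]

lemma aleph0_le_kappa : ℵ₀ ≤ kappa R := le_max_left _ _

lemma mk_R_le_kappa : #R ≤ kappa R := le_max_right _ _

lemma mk_finset_le_max (α : Type u) : #(Finset α) ≤ max ℵ₀ #α := by
  calc #(Finset α) ≤ #(Multiset α) := mk_le_of_injective (fun s t h => Finset.val_injective h)
    _ ≤ #(List α) := mk_le_of_surjective Quot.mk_surjective
    _ ≤ max ℵ₀ #α := mk_list_le_max α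

lemma mk_finsupp_le (α β : Type u) [Zero β] : #(α →₀ β) ≤ max ℵ₀ (#α * #β) := by
  calc #(α →₀ β) ≤ #(Finset (α × β)) := mk_le_of_injective (Finsupp.graph_injective α β)
    _ ≤ max ℵ₀ #(α × β) := mk_finset_le_max _
    _ = max ℵ₀ (#α * #β) := by rw [mk_prod, lift_id, lift_id]

lemma mk_span_le {M : Type u} [AddCommGroup M] [Module R M] {s : Set M}
    (hs : #s ≤ kappa R) : #(span R s) ≤ kappa R := by
  have hsur : Function.Surjective
      ((Finsupp.linearCombination R ((↑) : s → M)).codRestrict (span R s)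
        (fun c => by
          have := Finsupp.range_linearCombination (R := R) (v := ((↑) : s → M))
          rw [Subtype.range_coe] at this
          exact this ▸ LinearMap.mem_range_self _ c)) := by
    rintro ⟨x, hx⟩
    have : x ∈ LinearMap.range (Finsupp.linearCombination R ((↑) : s → M)) := by
      rw [Finsupp.range_linearCombination, Subtype.range_coe]; exact hx
    obtain ⟨c, hc⟩ := this
    exact ⟨c, Subtype.ext hc⟩
  calc #(span R s) ≤ #(s →₀ R) := mk_le_of_surjective hsur
    _ ≤ max ℵ₀ (#s * #R) := mk_finsupp_le _ _
    _ ≤ kappa R := by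
        apply max_le (aleph0_le_kappa)
        calc #s * #R ≤ kappa R * kappa R := mul_le_mul' hs mk_R_le_kappa
          _ = kappa R := mul_eq_self aleph0_le_kappa



variable {R : Type u} [Ring R] {M : Type u} [AddCommGroup M] [Module R M]

/-- index type for finite linear systems with constants in `span R S` -/
abbrev SysIdx (R : Type u) [Ring R] {M : Type u} [AddCommGroup M] [Module R M] (S : Set M) :
    Type u :=
  Σ mn : ℕ × ℕ, Matrix (Fin mn.1) (Fin mn.2) R × (Fin mn.1 → span R S)

def SysIdx.Solvable {S : Set M} (q : SysIdx R S) : Prop :=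
  ∃ y : Fin q.1.2 → M, ∀ i, ∑ j, q.2.1 i j • y j = (q.2.2 i : M)

noncomputable def step (S : Set M) : Set M :=
  S ∪ ⋃ q : {q : SysIdx R S // q.Solvable}, Set.range (Classical.choose q.2)

lemma subset_step (S : Set M) : S ⊆ step (R := R) S := Set.subset_union_left

lemma step_spec (S : Set M) {m n : ℕ} (A : Matrix (Fin m) (Fin n) R)
    (b : Fin m → span R S) (h : ∃ y : Fin n → M, ∀ i, ∑ j, A i j • y j = (b i : M)) :
    ∃ y : Fin n → M, (∀ j, y j ∈ step (R := R) S) ∧ ∀ i, ∑ j, A i j • y j = (b i : M) := by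
  set q : SysIdx R S := ⟨(m, n), A, b⟩ with hq
  have hsolv : q.Solvable := h
  refine ⟨Classical.choose hsolv, fun j => ?_, Classical.choose_spec hsolv⟩
  refine Set.mem_union_right _ (Set.mem_iUnion.2 ⟨⟨q, hsolv⟩, ?_⟩)
  exact Set.mem_range_self j

lemma mk_fin_fun_le {X : Type u} (h : #X ≤ kappa R) (m : ℕ) : #(Fin m → X) ≤ kappa R :=
  calc #(Fin m → X) = #X ^ (m : Cardinal) := by
        rw [mk_arrow, mk_fin, lift_natCast]; simp
    _ ≤ (kappa R) ^ (m : Cardinal) := power_le_power_right h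
    _ ≤ kappa R := power_nat_le aleph0_le_kappa

lemma mk_sysIdx_le (S : Set M) (h : #(span R S) ≤ kappa R) : #(SysIdx R S) ≤ kappa R := by
  calc #(SysIdx R S) = Cardinal.sum (fun mn : ℕ × ℕ =>
        #(Matrix (Fin mn.1) (Fin mn.2) R × (Fin mn.1 → span R S))) := mk_sigma _
    _ ≤ Cardinal.sum (fun _ : ℕ × ℕ => kappa R) := by
        apply Cardinal.sum_le_sum
        intro mn
        rw [mk_prod, lift_id, lift_id]
        calc #(Matrix (Fin mn.1) (Fin mn.2) R) * #(Fin mn.1 → span R S)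
            ≤ kappa R * kappa R :=
              mul_le_mul' (mk_fin_fun_le (mk_fin_fun_le (le_max_right _ _) _) _)
                (mk_fin_fun_le h _)
          _ = kappa R := mul_eq_self aleph0_le_kappa
    _ = Cardinal.lift.{u} #(ℕ × ℕ) * Cardinal.lift.{0} (kappa R) := sum_const _ _
    _ ≤ kappa R * kappa R := by
        refine mul_le_mul' ?_ (by simp)
        simpa using le_trans (by simp) aleph0_le_kappa
    _ = kappa R := mul_eq_self aleph0_le_kappa


lemma mk_step_le {S : Set M} (hspan : #(span R S) ≤ kappa R) (hS : #S ≤ kappa R) :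
    #(step (R := R) S) ≤ kappa R := by
  refine le_trans (mk_union_le _ _) ?_
  have h1 : #(⋃ q : {q : SysIdx R S // q.Solvable}, Set.range (Classical.choose q.2)) ≤
      kappa R := by
    refine le_trans (mk_iUnion_le _) ?_
    have hι : #{q : SysIdx R S // q.Solvable} ≤ kappa R :=
      le_trans (mk_subtype_le _) (mk_sysIdx_le S hspan)
    have hsup : ⨆ q : {q : SysIdx R S // q.Solvable}, #(Set.range (Classical.choose q.2)) ≤
        kappa R := by
      refine ciSup_le' fun q => ?_
      exact le_trans (lt_aleph0_of_finite _).le aleph0_le_kappa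
    calc #{q : SysIdx R S // q.Solvable} * ⨆ q, #(Set.range (Classical.choose q.2))
        ≤ kappa R * kappa R := mul_le_mul' hι hsup
      _ = kappa R := mul_eq_self aleph0_le_kappa
  calc #S + _ ≤ kappa R + kappa R := add_le_add hS h1
    _ = kappa R := add_eq_self aleph0_le_kappa



noncomputable def chain (S : Set M) : ℕ → Set M
  | 0 => S
  | k + 1 => step (R := R) (chain S k)

lemma chain_mono (S : Set M) : Monotone (chain (R := R) S) :=
  monotone_nat_of_le_succ fun k => subset_step _

lemma mk_chain_le {S : Set M} (hS : #S ≤ kappa R) (k : ℕ) :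
    #(chain (R := R) S k) ≤ kappa R := by
  induction k with
  | zero => exact hS
  | succ k ih => exact mk_step_le (mk_span_le ih) ih

noncomputable def closureGens (S : Set M) : Set M := ⋃ k : ULift.{u} ℕ, chain (R := R) S k.down

lemma subset_closureGens (S : Set M) : S ⊆ closureGens (R := R) S :=
  Set.subset_iUnion (fun k : ULift.{u} ℕ => chain (R := R) S k.down) ⟨0⟩

lemma mk_closureGens_le {S : Set M} (hS : #S ≤ kappa R) : #(closureGens (R := R) S) ≤ kappa R := by
  refine le_trans (mk_iUnion_le _) ?_
  calc #(ULift.{u} ℕ) * ⨆ k : ULift.{u} ℕ, #(chain (R := R) S k.down)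
      ≤ kappa R * kappa R := by
        refine mul_le_mul' (by simpa using aleph0_le_kappa) ?_
        exact ciSup_le' fun k => mk_chain_le hS k.down
    _ = kappa R := mul_eq_self aleph0_le_kappa

lemma span_closureGens_eq (S : Set M) :
    span R (closureGens (R := R) S) = ⨆ k : ℕ, span R (chain (R := R) S k) := by
  rw [closureGens, span_iUnion]
  exact le_antisymm (iSup_le fun k => le_iSup (fun k : ℕ => span R (chain (R := R) S k)) k.down)
    (iSup_le fun k => le_iSup (fun k : ULift.{u} ℕ => span R (chain (R := R) S k.down)) ⟨k⟩)

lemma isPure_span_closureGens (S : Set M) : IsPureSubmodule (span R (closureGens (R := R) S)) := by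
  intro m n A b hsolv
  -- find a common stage k
  have hmem : ∀ i, ∃ k : ℕ, (b i : M) ∈ span R (chain (R := R) S k) := by
    intro i
    have : (b i : M) ∈ ⨆ k : ℕ, span R (chain (R := R) S k) :=
      le_of_eq (span_closureGens_eq S) (b i).2
    exact (mem_iSup_of_chain
      ⟨fun k => span R (chain (R := R) S k), fun _ _ h => span_mono (chain_mono S h)⟩ _).1 this
  choose ks hks using hmem
  obtain ⟨k, hk⟩ : ∃ k : ℕ, ∀ i, (b i : M) ∈ span R (chain (R := R) S k) := by
    refine ⟨(Finset.univ.sup ks), fun i => ?_⟩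
    exact span_mono (chain_mono S (Finset.le_sup (Finset.mem_univ i))) (hks i)
  obtain ⟨y, hy, hy2⟩ := step_spec (chain (R := R) S k) A (fun i => ⟨b i, hk i⟩) hsolv
  have hyP : ∀ j, y j ∈ span R (closureGens (R := R) S) := fun j =>
    subset_span (Set.mem_iUnion.2 ⟨⟨k + 1⟩, hy j⟩)
  refine ⟨fun j => ⟨y j, hyP j⟩, fun i => ?_⟩
  apply Subtype.ext
  push_cast
  simpa using hy2 i



/-- linear map `(Fin n → R) →ₗ[R] X` given by coefficients against a family. -/
def piCombination {X : Type u} [AddCommGroup X] [Module R X] {n : ℕ} (z : Fin n → X) :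
    (Fin n → R) →ₗ[R] X where
  toFun c := ∑ j, c j • z j
  map_add' c d := by simp [add_smul, Finset.sum_add_distrib]
  map_smul' r c := by simp [Finset.smul_sum, mul_smul]

lemma isPhantom_restrict {M N : Type u} [AddCommGroup M] [AddCommGroup N] [Module R M]
    [Module R N] (f : M →ₗ[R] N) (hf : IsPhantom f) (M' : Submodule R M) {N' : Submodule R N}
    (hN' : IsPureSubmodule N') (hsub : ∀ x ∈ M', f x ∈ N') :
    IsPhantom (f.restrict hsub) := by
  classical
  intro L _ _ _ g
  obtain ⟨k, ℓ, hspan⟩ := Module.Finite.exists_fin (R := R) (M := L)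
  obtain ⟨P, _, _, hP, α, β, hβα⟩ := hf L (M'.subtype.comp g)
  obtain ⟨σ, hσ⟩ := (Module.projective_def').1 hP
  set π : (P →₀ R) →ₗ[R] P := Finsupp.linearCombination R (id : P → P) with hπ
  set α' : L →ₗ[R] (P →₀ R) := σ.comp α with hα'
  set β' : (P →₀ R) →ₗ[R] N := β.comp π with hβ'
  have hβα' : ∀ x : L, β' (α' x) = f (M'.subtype (g x)) := by
    intro x
    have h1 : π (σ (α x)) = α x := congrArg (· (α x)) hσ
    have h2 : β (α x) = f (M'.subtype (g x)) := congrArg (· x) hβα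
    simp only [β', α', LinearMap.comp_apply, h1]
    exact h2
  set T : Finset P := Finset.univ.biUnion fun i : Fin k => (α' (ℓ i)).support with hT
  set n := T.card with hn
  set e : Fin n → P := fun j => (T.equivFin.symm j : P) with he
  set A : Matrix (Fin k) (Fin n) R := fun i j => (α' (ℓ i)) (e j) with hA
  set b : Fin k → N' := fun i => f.restrict hsub (g (ℓ i)) with hb
  have hsingle : ∀ i, ∑ j : Fin n, Finsupp.single (e j) ((α' (ℓ i)) (e j)) = α' (ℓ i) := by
    intro i
    have hsupp : (α' (ℓ i)).support ⊆ T := fun p hp =>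
      Finset.mem_biUnion.2 ⟨i, Finset.mem_univ i, hp⟩
    have h1 : ∑ j : Fin n, Finsupp.single (e j) ((α' (ℓ i)) (e j)) =
        ∑ p ∈ T, Finsupp.single p ((α' (ℓ i)) p) := by
      rw [← Finset.sum_coe_sort T (fun p => Finsupp.single p ((α' (ℓ i)) p))]
      exact Fintype.sum_equiv T.equivFin.symm _ _ (fun j => rfl)
    rw [h1, ← Finset.sum_subset hsupp (fun p _ hp => by
      rw [Finsupp.notMem_support_iff.1 hp, Finsupp.single_zero])]
    exact Finsupp.sum_single (α' (ℓ i))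
  have hsolv : ∃ y : Fin n → N, ∀ i, ∑ j, A i j • y j = (b i : N) := by
    refine ⟨fun j => β' (Finsupp.single (e j) 1), fun i => ?_⟩
    calc ∑ j, A i j • β' (Finsupp.single (e j) 1)
        = β' (∑ j, Finsupp.single (e j) (A i j)) := by
          rw [map_sum]
          exact Finset.sum_congr rfl fun j _ => by
            rw [← map_smul, Finsupp.smul_single', mul_one]
      _ = β' (α' (ℓ i)) := by rw [show (∑ j, Finsupp.single (e j) (A i j)) = α' (ℓ i) from
            hsingle i]
      _ = (b i : N) := hβα' (ℓ i)
  obtain ⟨z, hz⟩ := hN' k n A b hsolv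
  refine ⟨(Fin n → R), inferInstance, inferInstance, inferInstance,
    LinearMap.pi (fun j => (Finsupp.lapply (e j)).comp α'), piCombination z, ?_⟩
  refine LinearMap.ext_on_range hspan fun i => ?_
  apply Subtype.ext
  have h1 : (piCombination z) (fun j => (α' (ℓ i)) (e j)) = ∑ j, A i j • z j := rfl
  calc ((piCombination z).comp (LinearMap.pi fun j => (Finsupp.lapply (e j)).comp α') (ℓ i) : N)
      = ((∑ j, A i j • z j : N') : N) := by rw [LinearMap.comp_apply]; exact congrArg _ (congrArg _ rfl)
    _ = ((b i : N') : N) := by rw [hz i]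
    _ = ((f.restrict hsub).comp g (ℓ i) : N) := rfl


lemma exists_pure_span {M : Type u} [AddCommGroup M] [Module R M] (S : Set M)
    (hS : #S ≤ kappa R) :
    ∃ g : Set M, S ⊆ g ∧ #g ≤ kappa R ∧ IsPureSubmodule (span R g) :=
  ⟨closureGens (R := R) S, subset_closureGens S, mk_closureGens_le hS, isPure_span_closureGens S⟩

lemma exists_goodPair {M N : Type u} [AddCommGroup M] [AddCommGroup N] [Module R M] [Module R N]
    (f : M →ₗ[R] N) (hf : IsPhantom f) (S₁ : Set M) (S₂ : Set N)
    (h₁ : #S₁ ≤ kappa R) (h₂ : #S₂ ≤ kappa R) :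
    ∃ p : Submodule R M × Submodule R N,
      IsGoodPair f (kappa R) p ∧ S₁ ⊆ ↑p.1 ∧ S₂ ⊆ ↑p.2 := by
  obtain ⟨g₁, hSg₁, hg₁, hpure₁⟩ := exists_pure_span S₁ h₁
  have h₂' : #(S₂ ∪ f '' g₁ : Set N) ≤ kappa R := by
    refine le_trans (mk_union_le _ _) ?_
    calc #S₂ + #(f '' g₁) ≤ kappa R + kappa R :=
          add_le_add h₂ (le_trans mk_image_le hg₁)
      _ = kappa R := add_eq_self aleph0_le_kappa
  obtain ⟨g₂, hSg₂, hg₂, hpure₂⟩ := exists_pure_span (S₂ ∪ f '' g₁) h₂'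
  have hsub : ∀ x ∈ span R g₁, f x ∈ span R g₂ := by
    intro x hx
    have : Submodule.map f (span R g₁) ≤ span R g₂ := by
      rw [Submodule.map_span]
      exact span_mono fun y hy => hSg₂ (Set.mem_union_right _ hy)
    exact this ⟨x, hx, rfl⟩
  refine ⟨(span R g₁, span R g₂), ⟨hpure₁, hpure₂, hsub, ?_, ⟨g₁, hg₁, rfl⟩, ⟨g₂, hg₂, rfl⟩⟩,
    fun x hx => subset_span (hSg₁ hx),
    fun y hy => subset_span (hSg₂ (Set.mem_union_left _ hy))⟩
  intro hsub'
  exact isPhantom_restrict f hf _ hpure₂ hsub'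

/-- There is an infinite cardinal `κ` such that every phantom morphism `f : M → N` is the
directed union of its pure phantom subrepresentations of type `κ`: the collection of good
pairs is directed under componentwise inclusion and its unions exhaust `M` and `N`. -/
theorem phantom_directed_union_of_type_kappa {R : Type u} [Ring R] :
    ∃ κ : Cardinal.{u}, Cardinal.aleph0 ≤ κ ∧
      ∀ (M N : Type u) [AddCommGroup M] [AddCommGroup N] [Module R M] [Module R N]
        (f : M →ₗ[R] N), IsPhantom f →
        DirectedOn (· ≤ ·) {p : Submodule R M × Submodule R N | IsGoodPair f κ p} ∧
        (∀ x : M, ∃ p : Submodule R M × Submodule R N, IsGoodPair f κ p ∧ x ∈ p.1) ∧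
        (∀ y : N, ∃ p : Submodule R M × Submodule R N, IsGoodPair f κ p ∧ y ∈ p.2) := by
  refine ⟨kappa R, aleph0_le_kappa, fun M N _ _ _ _ f hf => ⟨?_, ?_, ?_⟩⟩
  · rintro p ⟨_, _, _, _, ⟨s, hs, hsp⟩, ⟨t, ht, htp⟩⟩ q ⟨_, _, _, _, ⟨s', hs', hsp'⟩, ⟨t', ht', htp'⟩⟩
    have h₁ : #(s ∪ s' : Set M) ≤ kappa R := by
      refine le_trans (mk_union_le _ _) ?_
      calc #s + #s' ≤ kappa R + kappa R := add_le_add hs hs'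
        _ = kappa R := add_eq_self aleph0_le_kappa
    have h₂ : #(t ∪ t' : Set N) ≤ kappa R := by
      refine le_trans (mk_union_le _ _) ?_
      calc #t + #t' ≤ kappa R + kappa R := add_le_add ht ht'
        _ = kappa R := add_eq_self aleph0_le_kappa
    obtain ⟨r, hr, hr₁, hr₂⟩ := exists_goodPair f hf (s ∪ s') (t ∪ t') h₁ h₂
    refine ⟨r, hr, ⟨?_, ?_⟩, ⟨?_, ?_⟩⟩
    · rw [← hsp]; exact span_le.2 fun x hx => hr₁ (Set.mem_union_left _ hx)
    · rw [← htp]; exact span_le.2 fun y hy => hr₂ (Set.mem_union_left _ hy)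
    · rw [← hsp']; exact span_le.2 fun x hx => hr₁ (Set.mem_union_right _ hx)
    · rw [← htp']; exact span_le.2 fun y hy => hr₂ (Set.mem_union_right _ hy)
  · intro x
    obtain ⟨p, hp, hp₁, _⟩ := exists_goodPair f hf {x} ∅
      (le_trans (by simp) aleph0_le_kappa) (by simp)
    exact ⟨p, hp, hp₁ rfl⟩
  · intro y
    obtain ⟨p, hp, _, hp₂⟩ := exists_goodPair f hf ∅ {y}
      (by simp) (le_trans (by simp) aleph0_le_kappa)
    exact ⟨p, hp, hp₂ rfl⟩
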